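/- Let α ≥ 2 be an integer, μ a nonzero complex number, and t(z), s(z) monic complex polynomials of degree α satisfying t'(z)·s(z) − t(z)·s'(z) = α·μ·z^(α−1) for all z. Then there exist complex constants ω₀, σ₀ with σ₀ − ω₀ = μ such that t(z) = z^α + ω₀ and s(z) = z^α + σ₀. -/
import Mathlib

open Polynomial

theorem stmt_1 (α : ℕ) (hα : 2 ≤ α) (μ : ℂ) (hμ : μ ≠ 0)
    (t s : Polynomial ℂ) (hmt : t.Monic) (hms : s.Monic)
    (hdt : t.natDegree = α) (hds : s.natDegree = α)
    (h : ∀ z : ℂ,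
      (Polynomial.derivative t).eval z * s.eval z
        - t.eval z * (Polynomial.derivative s).eval z = (α : ℂ) * μ * z ^ (α - 1)) :
    ∃ ω₀ σ₀ : ℂ, σ₀ - ω₀ = μ ∧
      (∀ z : ℂ, t.eval z = z ^ α + ω₀) ∧ (∀ z : ℂ, s.eval z = z ^ α + σ₀) := by
  have hαC : ((α : ℂ)) ≠ 0 := Nat.cast_ne_zero.mpr (by omega)
  have key0 : derivative t * s - t * derivative s = C ((α:ℂ) * μ) * X ^ (α - 1) := by
    apply Polynomial.funext
    intro z
    simp only [eval_sub, eval_mul, eval_C, eval_pow, eval_X]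
    exact h z
  set u : ℂ[X] := t - s with hu
  have key : t * derivative u - derivative t * u = C ((α:ℂ) * μ) * X ^ (α - 1) := by
    rw [hu, derivative_sub]
    linear_combination key0
  have hu0 : u ≠ 0 := by
    intro h0
    rw [h0] at key
    simp [hμ] at key
    omega
  have hdegu : u.degree < t.degree := by
    apply Polynomial.degree_sub_lt
    · rw [degree_eq_natDegree hmt.ne_zero, degree_eq_natDegree hms.ne_zero, hdt, hds]
    · exact hmt.ne_zero
    · rw [hmt.leadingCoeff, hms.leadingCoeff]
  have hklt : u.natDegree < α := by
    have := Polynomial.natDegree_lt_natDegree hu0 hdegu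
    rwa [hdt] at this
  -- u has natDegree 0
  have hk0 : u.natDegree = 0 := by
    by_contra hk
    set k := u.natDegree with hkdef
    have hk1 : 1 ≤ k := Nat.one_le_iff_ne_zero.mpr hk
    have hdu : (derivative u).natDegree = k - 1 :=
      Polynomial.natDegree_eq_of_degree_eq_some
        (Polynomial.degree_derivative_eq u (by omega))
    -- coefficient at α - 1 + k
    have hc := congrArg (fun p => p.coeff (α - 1 + k)) key
    simp only [coeff_sub, coeff_C_mul, coeff_X_pow] at hc
    have e1 : (t * derivative u).coeff (α - 1 + k) = (derivative u).leadingCoeff := by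
      have : α - 1 + k = t.natDegree + (derivative u).natDegree := by
        rw [hdt, hdu]; omega
      rw [this, Polynomial.coeff_mul_degree_add_degree, hmt.leadingCoeff, one_mul]
    have e2 : (derivative t * u).coeff (α - 1 + k) = (α : ℂ) * u.leadingCoeff := by
      have hdtd : (derivative t).natDegree = α - 1 :=
        Polynomial.natDegree_eq_of_degree_eq_some
          (by rw [Polynomial.degree_derivative_eq t (by omega), hdt])
      have : α - 1 + k = (derivative t).natDegree + u.natDegree := by rw [hdtd]
      rw [this, Polynomial.coeff_mul_degree_add_degree]
      congr 1
      rw [Polynomial.leadingCoeff, hdtd, coeff_derivative]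
      have : α - 1 + 1 = α := by omega
      have h1 : t.coeff α = 1 := by rw [← hdt]; exact hmt.coeff_natDegree
      rw [this, h1, one_mul, Nat.cast_sub (by omega : 1 ≤ α)]
      ring
    have e3 : (derivative u).leadingCoeff = u.leadingCoeff * (k : ℂ) := by
      rw [Polynomial.leadingCoeff, hdu, coeff_derivative]
      have h1 : k - 1 + 1 = k := by omega
      rw [h1, Polynomial.leadingCoeff, ← hkdef, Nat.cast_sub hk1]
      push_cast
      ring
    rw [e1, e2, e3, if_neg (by omega)] at hc
    have : ((k : ℂ) - α) * u.leadingCoeff = 0 := by linear_combination hc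
    rcases mul_eq_zero.mp this with h1 | h1
    · have : (k : ℂ) = (α : ℂ) := by linear_combination h1
      have : k = α := Nat.cast_injective this
      omega
    · exact hu0 (Polynomial.leadingCoeff_eq_zero.mp h1)
  -- so u = C c
  have huc : u = C (u.coeff 0) := Polynomial.eq_C_of_natDegree_eq_zero hk0
  set c : ℂ := u.coeff 0 with hcdef
  rw [huc] at key
  simp only [derivative_C, mul_zero, zero_sub] at key
  -- c = -μ : compare coeff at α - 1
  have hdtd : (derivative t).coeff (α - 1) = (α : ℂ) := by
    rw [coeff_derivative]
    have : α - 1 + 1 = α := by omega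
    have h1 : t.coeff α = 1 := by rw [← hdt]; exact hmt.coeff_natDegree
    rw [this, h1, one_mul, Nat.cast_sub (by omega : 1 ≤ α)]
    ring
  have hc1 := congrArg (fun p => p.coeff (α - 1)) key
  simp only [coeff_neg, coeff_C_mul, coeff_X_pow, if_pos rfl, mul_one,
    Polynomial.coeff_mul_C, hdtd] at hc1
  have hcval : c = -μ := by
    simp only [if_true, mul_one] at hc1
    have h2 : (α : ℂ) * c = (α : ℂ) * (-μ) := by linear_combination (-1 : ℂ) * hc1
    exact mul_left_cancel₀ hαC h2
  -- derivative t = C α * X ^ (α-1)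
  have hdt' : derivative t = C (α : ℂ) * X ^ (α - 1) := by
    have hμC : (C μ : ℂ[X]) ≠ 0 := by simpa using hμ
    apply mul_right_cancel₀ hμC
    rw [hcval, map_neg] at key
    simp only [mul_neg, neg_neg] at key
    rw [key, C_mul]
    ring
  have hderiv0 : derivative (t - X ^ α) = 0 := by
    rw [derivative_sub, derivative_X_pow, hdt', sub_self]
  have hnd0 : (t - X ^ α).natDegree = 0 :=
    Polynomial.natDegree_eq_zero_of_derivative_eq_zero hderiv0
  have ht : t = X ^ α + C ((t - X ^ α).coeff 0) := by
    have := Polynomial.eq_C_of_natDegree_eq_zero hnd0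
    linear_combination this
  set ω₀ : ℂ := (t - X ^ α).coeff 0 with hw
  have hs : s = X ^ α + C (ω₀ + μ) := by
    have : s = t - u := by rw [hu]; ring
    rw [this, huc, hcval, ht, map_add, map_neg]
    ring
  refine ⟨ω₀, ω₀ + μ, by ring, ?_, ?_⟩
  · intro z
    rw [ht]
    simp
  · intro z
    rw [hs]
    simp
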